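/- Let N = {1, ..., n} with n ≥ 2 and let Γ be the directed cycle on N with edge set {(i, i+1) : i = 1, ..., n-1} ∪ {(n, 1)}. Fix a player i ∈ N. Then for every k ∈ {1, ..., n} there is exactly one permutation π of N consistent with Γ such that |P̄_π(i)| = k; equivalently, the map π ↦ |P̄_π(i)| is a bijection from the set of permutations consistent with Γ onto {1, ..., n}. -/

import Mathlib

/-- Edge relation of the directed cycle `(1, 2, ..., n, 1)` on `Fin n`:
there is a directed edge from `i` to `i + 1` (mod `n`). -/
def cycleEdge (n : ℕ) [NeZero n] (i j : Fin n) : Prop := j = i + 1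

/-- `j` is a successor of `i` in the restriction of the cycle digraph to the
coalition `S`, i.e. there is a directed path from `i` to `j` using only
players of `S`. -/
def isSuccessorIn (n : ℕ) [NeZero n] (S : Set (Fin n)) (i j : Fin n) : Prop :=
  Relation.TransGen (fun a b => a ∈ S ∧ b ∈ S ∧ cycleEdge n a b) i j

/-- `i` dominates `j` in the restriction of the cycle digraph to `S`:
`j` is a successor of `i` but `i` is not a successor of `j`. -/
def dominatesIn (n : ℕ) [NeZero n] (S : Set (Fin n)) (i j : Fin n) : Prop :=
  isSuccessorIn n S i j ∧ ¬ isSuccessorIn n S j i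

/-- `P̄_π(i)`: the set of players whose position under `π` is at most that of `i`
(including `i` itself). -/
def Pbar {n : ℕ} (π : Equiv.Perm (Fin n)) (i : Fin n) : Set (Fin n) := {j | π j ≤ π i}

/-- `P_π(i)`: the set of players whose position under `π` is strictly less than
that of `i`. -/
def Pset {n : ℕ} (π : Equiv.Perm (Fin n)) (i : Fin n) : Set (Fin n) := {j | π j < π i}

/-- A permutation `π` is consistent with the directed cycle on `Fin n` if for
every player `i`, no player `j ∈ P̄_π(i)` dominates `i` in the restriction of
the cycle digraph to `P̄_π(i)`. -/
def consistent (n : ℕ) [NeZero n] (π : Equiv.Perm (Fin n)) : Prop :=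
  ∀ i : Fin n, ∀ j ∈ Pbar π i, ¬ dominatesIn n (Pbar π i) j i

open scoped Fin.NatCast Fin.CommRing

namespace CycleAux

variable {n : ℕ} [NeZero n]

lemma succ_of_forall (S : Set (Fin n)) (a : Fin n) :
    ∀ m : ℕ, 1 ≤ m → (∀ l ≤ m, a + (l : Fin n) ∈ S) → isSuccessorIn n S a (a + (m : Fin n)) := by
  intro m
  induction m with
  | zero => omega
  | succ m ih =>
    intro _ h
    rcases Nat.eq_zero_or_pos m with rfl | hm
    · refine Relation.TransGen.single ⟨by simpa using h 0 (by omega), h 1 le_rfl, ?_⟩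
      show cycleEdge n _ _
      simp only [cycleEdge]; push_cast; ring
    · refine Relation.TransGen.tail (ih hm (fun l hl => h l (by omega))) ⟨h m (by omega), h (m+1) le_rfl, ?_⟩
      show cycleEdge n _ _
      simp only [cycleEdge]; push_cast; ring

lemma succ_exists {S : Set (Fin n)} {a b : Fin n} (h : isSuccessorIn n S a b) :
    ∃ m : ℕ, 1 ≤ m ∧ b = a + (m : Fin n) ∧ ∀ l ≤ m, a + (l : Fin n) ∈ S := by
  induction h with
  | single hab =>
    obtain ⟨ha, hb, he⟩ := hab
    refine ⟨1, le_rfl, by simpa [cycleEdge] using he, ?_⟩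
    intro l hl
    interval_cases l
    · simpa using ha
    · simpa using (by simpa using he ▸ hb : a + 1 ∈ S)
  | tail _ hbc ih =>
    obtain ⟨m, hm, hb, hall⟩ := ih
    obtain ⟨hb', hc, he⟩ := hbc
    refine ⟨m + 1, by omega, ?_, ?_⟩
    · rw [he, hb]; push_cast; ring
    · intro l hl
      rcases Nat.lt_or_ge l (m+1) with h' | h'
      · exact hall l (by omega)
      · have : l = m + 1 := by omega
        subst this
        have : a + ((m+1 : ℕ) : Fin n) = a + ((m:ℕ):Fin n) + 1 := by push_cast; ring
        rw [this, ← hb, ← he]; exact hc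

lemma reach_all {S : Set (Fin n)} (hS : ∀ x, x ∈ S) (a b : Fin n) : isSuccessorIn n S a b := by
  have key := succ_of_forall S a (n + (b - a).val) (by have := n.pos_of_neZero; omega) (fun l _ => hS _)
  have : a + ((n + (b - a).val : ℕ) : Fin n) = b := by
    push_cast
    rw [Fin.natCast_self]
    ring_nf
  rwa [this] at key

lemma val_sub_one (hn : 2 ≤ n) (x : Fin n) : (x - 1).val = (x.val + (n - 1)) % n := by
  rw [Fin.sub_def]
  have h1 : (1 : Fin n).val = 1 := by simp [Fin.val_one', Nat.mod_eq_of_lt (by omega : 1 < n)]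
  simp only [h1]
  congr 1
  omega

lemma edge_dec {S : Set (Fin n)} {c : Fin n} {v : ℕ} (hv : v < n - 1)
    (hS : ∀ x ∈ S, (c - x).val ≤ v) {a b : Fin n}
    (ha : a ∈ S) (hb : b ∈ S) (he : b = a + 1) : (c - b).val < (c - a).val := by
  have hn : 2 ≤ n := by have := Fin.is_lt (c - a); omega
  have hcb : c - b = (c - a) - 1 := by rw [he]; ring
  have hva := hS a ha
  have hvb := hS b hb
  rw [hcb, val_sub_one hn] at hvb ⊢
  have hx := Fin.is_lt (c - a)
  rcases Nat.eq_zero_or_pos (c - a).val with h0 | h0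
  · rw [h0] at hvb
    rw [Nat.mod_eq_of_lt (by omega)] at hvb
    omega
  · have : (c - a).val + (n - 1) = ((c - a).val - 1) + n := by omega
    rw [this, Nat.add_mod_right, Nat.mod_eq_of_lt (by omega)]
    omega

lemma succ_dec {S : Set (Fin n)} {c : Fin n} {v : ℕ} (hv : v < n - 1)
    (hS : ∀ x ∈ S, (c - x).val ≤ v) {a b : Fin n}
    (h : isSuccessorIn n S a b) : (c - b).val < (c - a).val := by
  induction h with
  | single hab => exact edge_dec hv hS hab.1 hab.2.1 hab.2.2
  | tail _ hbc ih => exact lt_trans (edge_dec hv hS hbc.1 hbc.2.1 hbc.2.2) ih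

lemma pbar_ncard (π : Equiv.Perm (Fin n)) (i : Fin n) :
    (Pbar π i).ncard = (π i).val + 1 := by
  have h1 : Pbar π i = π.symm '' (Set.Iic (π i)) := by
    rw [Equiv.image_eq_preimage_symm]
    ext j
    simp [Pbar, Set.mem_setOf_eq, Set.mem_Iic]
  rw [h1, Set.ncard_image_of_injective _ π.symm.injective, ← Finset.coe_Iic,
    Set.ncard_coe_finset, Fin.card_Iic]

lemma mem_pbar {π : Equiv.Perm (Fin n)} {i j : Fin n} : j ∈ Pbar π i ↔ π j ≤ π i := Iff.rfl

lemma consistent_subLeft (c : Fin n) : consistent n (Equiv.subLeft c) := by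
  intro i j hj hdom
  obtain ⟨hji, hnij⟩ := hdom
  have happ : ∀ x : Fin n, (Equiv.subLeft c) x = c - x := fun x => rfl
  have hS : ∀ x, x ∈ Pbar (Equiv.subLeft c) i ↔ (c - x).val ≤ (c - i).val := by
    intro x
    rw [mem_pbar, happ, happ, Fin.le_def]
  rcases Nat.lt_or_ge ((c - i).val) (n - 1) with hv | hv
  · have hji' := succ_dec hv (fun x hx => (hS x).mp hx) hji
    have := (hS j).mp hj
    omega
  · exact hnij (reach_all (fun x => (hS x).mpr (by have := Fin.is_lt (c - x); omega)) i j)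


lemma val_neg_one (hn : 2 ≤ n) : ((-1 : Fin n)).val = n - 1 := by
  have : (-1 : Fin n) = 0 - 1 := by ring
  rw [this, val_sub_one hn]
  simp [Nat.mod_eq_of_lt (by omega : n - 1 < n)]

lemma consistent_step {π : Equiv.Perm (Fin n)} (hc : consistent n π) (hn : 2 ≤ n)
    {p : Fin n} (hp : (π p).val ≠ n - 1) : (π p).val < (π (p - 1)).val := by
  by_contra hle
  push_neg at hle
  have hj : p - 1 ∈ Pbar π p := Fin.le_def.mpr hle
  refine hc p (p - 1) hj ⟨?_, ?_⟩
  · exact Relation.TransGen.single ⟨hj, mem_pbar.mpr le_rfl, (sub_add_cancel p 1).symm⟩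
  · intro h'
    obtain ⟨m, hm, heq, hall⟩ := succ_exists h'
    have hcast : ((m : ℕ) : Fin n) = -1 := by
      have : p + ((m:ℕ):Fin n) - p = p - 1 - p := by rw [heq]
      simpa using (by linear_combination this : ((m:ℕ):Fin n) = -1)
    have hmval : m % n = n - 1 := by
      have := congrArg Fin.val hcast
      rwa [Fin.val_natCast, val_neg_one hn] at this
    have hmn : n - 1 ≤ m := by
      rcases Nat.lt_or_ge m n with h | h
      · rw [Nat.mod_eq_of_lt h] at hmval; omega
      · omega
    have hall' : ∀ q : Fin n, q ∈ Pbar π p := by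
      intro q
      have : p + (((q - p).val : ℕ) : Fin n) = q := by
        rw [Fin.cast_val_eq_self]
        ring_nf
      rw [← this]
      exact hall _ (by have := Fin.is_lt (q - p); omega)
    have hL : (⟨n - 1, by omega⟩ : Fin n) = π (π.symm ⟨n - 1, by omega⟩) := (Equiv.apply_symm_apply _ _).symm
    have := mem_pbar.mp (hall' (π.symm ⟨n - 1, by omega⟩))
    rw [← hL] at this
    have := Fin.le_def.mp this
    simp only at this
    have := Fin.is_lt (π p)
    omega


lemma ne_last {π : Equiv.Perm (Fin n)} (hn : 2 ≤ n) (j : ℕ) (hj0 : 0 < j) (hjn : j < n) :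
    (π (π.symm ⟨n-1, by omega⟩ + (j : Fin n))).val ≠ n - 1 := by
  intro h
  have hp : π (π.symm ⟨n-1, by omega⟩ + (j : Fin n)) = π (π.symm ⟨n-1, by omega⟩) := by
    rw [Equiv.apply_symm_apply]
    exact Fin.ext h
  have h2 := π.injective hp
  have hz : ((j : ℕ) : Fin n) = 0 := by linear_combination h2
  have h3 := congrArg Fin.val hz
  rw [Fin.val_natCast, Nat.mod_eq_of_lt hjn] at h3
  simp at h3
  omega

lemma cast_shift (t : Fin n) (j : ℕ) : t + ((j+1 : ℕ) : Fin n) - 1 = t + ((j : ℕ) : Fin n) := by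
  push_cast; ring

lemma consistent_val_le {π : Equiv.Perm (Fin n)} (hc : consistent n π) (hn : 2 ≤ n) :
    ∀ j : ℕ, j < n → (π (π.symm ⟨n-1, by omega⟩ + (j : Fin n))).val ≤ n - 1 - j := by
  intro j
  induction j with
  | zero =>
    intro _
    have h0 : (π.symm ⟨n-1, by omega⟩ : Fin n) + ((0:ℕ) : Fin n) = π.symm ⟨n-1, by omega⟩ := by
      push_cast; ring
    rw [h0, Equiv.apply_symm_apply]
    simp
  | succ j ih =>
    intro hj
    have hpne := ne_last (π := π) hn (j+1) (by omega) hj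
    have hstep := consistent_step hc hn hpne
    rw [cast_shift] at hstep
    have := ih (by omega)
    omega

lemma consistent_val_ge {π : Equiv.Perm (Fin n)} (hc : consistent n π) (hn : 2 ≤ n) :
    ∀ d : ℕ, d ≤ n - 1 → d ≤ (π (π.symm ⟨n-1, by omega⟩ + ((n-1-d : ℕ) : Fin n))).val := by
  intro d
  induction d with
  | zero => intro _; omega
  | succ d ih =>
    intro hd
    have hj1 : n - 1 - d = (n - 1 - (d+1)) + 1 := by omega
    have hpne := ne_last (π := π) hn (n - 1 - d) (by omega) (by omega)
    have hstep := consistent_step hc hn hpne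
    rw [hj1, cast_shift] at hstep
    have := ih (by omega)
    rw [hj1] at this
    omega

lemma consistent_vals {π : Equiv.Perm (Fin n)} (hc : consistent n π) (hn : 2 ≤ n)
    (j : ℕ) (hj : j < n) :
    (π (π.symm ⟨n-1, by omega⟩ + (j : Fin n))).val = n - 1 - j := by
  have h1 := consistent_val_le hc hn j hj
  have h2 := consistent_val_ge hc hn (n - 1 - j) (by omega)
  have : n - 1 - (n - 1 - j) = j := by omega
  rw [this] at h2
  omega

lemma consistent_eq {π : Equiv.Perm (Fin n)} (hc : consistent n π) (hn : 2 ≤ n) :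
    π = Equiv.subLeft (π.symm ⟨n-1, by omega⟩ - 1) := by
  set t := π.symm (⟨n-1, by omega⟩ : Fin n) with ht
  apply Equiv.ext
  intro p
  set j := (p - t).val with hjdef
  have hj : j < n := Fin.is_lt _
  have hp : t + ((j : ℕ) : Fin n) = p := by
    rw [hjdef, Fin.cast_val_eq_self]; ring
  have hval : (π p).val = n - 1 - j := by
    rw [← hp]; exact consistent_vals hc hn j hj
  have hr : (Equiv.subLeft (t - 1)) p = ((n - 1 - j : ℕ) : Fin n) := by
    show (t - 1) - p = _
    rw [Nat.cast_sub (by omega : j ≤ n - 1), Nat.cast_sub (by omega : 1 ≤ n)]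
    push_cast
    rw [Fin.natCast_self, hjdef, Fin.cast_val_eq_self]
    ring
  apply Fin.ext
  rw [hval, hr, Fin.val_natCast, Nat.mod_eq_of_lt (by omega)]


end CycleAux

/-- Fix a player `i` in the directed `n`-cycle. For every `k ∈ {1, ..., n}`
there is exactly one permutation `π` consistent with the cycle such that
`|P̄_π(i)| = k`. -/
theorem cycle_consistent_Pbar_card_existsUnique (n : ℕ) [NeZero n] (hn : 2 ≤ n)
    (i : Fin n) :
    ∀ k : ℕ, 1 ≤ k → k ≤ n →
      ∃! π : Equiv.Perm (Fin n), consistent n π ∧ (Pbar π i).ncard = k := by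
  intro k hk1 hkn
  set c : Fin n := i + ((k - 1 : ℕ) : Fin n) with hc
  refine ⟨Equiv.subLeft c, ⟨CycleAux.consistent_subLeft c, ?_⟩, ?_⟩
  · rw [CycleAux.pbar_ncard]
    have h1 : (Equiv.subLeft c) i = ((k - 1 : ℕ) : Fin n) := by
      show c - i = _
      rw [hc]; ring
    rw [h1, Fin.val_natCast, Nat.mod_eq_of_lt (by omega)]
    omega
  · rintro π ⟨hcons, hcard⟩
    have hEq := CycleAux.consistent_eq hcons hn
    set t : Fin n := π.symm ⟨n - 1, by omega⟩ with ht
    rw [hEq, CycleAux.pbar_ncard] at hcard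
    have h2 : ((Equiv.subLeft (t - 1)) i) = (t - 1) - i := rfl
    rw [h2] at hcard
    have h3 : ((t - 1) - i).val = k - 1 := by omega
    have h4 : t - 1 = c := by
      rw [hc, ← h3, Fin.cast_val_eq_self]
      ring
    rw [hEq, h4]
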